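/- For every unit vector γ ∈ ℝ³ (‖γ‖ = 1), one has γ̃(r(γ)) = γ; that is, the map γ̃ is a left inverse of r on the unit sphere. -/

import Mathlib

open Real

/-- The contact point vector `r(γ)` (in body coordinates) of the ellipsoid with
semi-axes `a, b, c`, as a function of the Poisson vector `γ`. -/
noncomputable def contactPoint (a b c : ℝ) (γ : EuclideanSpace ℝ (Fin 3)) :
    EuclideanSpace ℝ (Fin 3) :=
  WithLp.toLp 2 ![-(a ^ 2 * γ 0) / Real.sqrt (a ^ 2 * γ 0 ^ 2 + b ^ 2 * γ 1 ^ 2 + c ^ 2 * γ 2 ^ 2),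
    -(b ^ 2 * γ 1) / Real.sqrt (a ^ 2 * γ 0 ^ 2 + b ^ 2 * γ 1 ^ 2 + c ^ 2 * γ 2 ^ 2),
    -(c ^ 2 * γ 2) / Real.sqrt (a ^ 2 * γ 0 ^ 2 + b ^ 2 * γ 1 ^ 2 + c ^ 2 * γ 2 ^ 2)]

/-- The Poisson vector `γ̃(r)` as a function of the contact point `r`. -/
noncomputable def poissonVec (a b c : ℝ) (r : EuclideanSpace ℝ (Fin 3)) :
    EuclideanSpace ℝ (Fin 3) :=
  WithLp.toLp 2 ![-(b ^ 2 * c ^ 2 * r 0) /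
      Real.sqrt (b ^ 4 * c ^ 4 * r 0 ^ 2 + a ^ 4 * c ^ 4 * r 1 ^ 2 + a ^ 4 * b ^ 4 * r 2 ^ 2),
    -(a ^ 2 * c ^ 2 * r 1) /
      Real.sqrt (b ^ 4 * c ^ 4 * r 0 ^ 2 + a ^ 4 * c ^ 4 * r 1 ^ 2 + a ^ 4 * b ^ 4 * r 2 ^ 2),
    -(a ^ 2 * b ^ 2 * r 2) /
      Real.sqrt (b ^ 4 * c ^ 4 * r 0 ^ 2 + a ^ 4 * c ^ 4 * r 1 ^ 2 + a ^ 4 * b ^ 4 * r 2 ^ 2)]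

/-- For every unit vector `γ`, `γ̃(r(γ)) = γ`: the map `γ̃` is a left inverse of `r`
on the unit sphere. -/
theorem poissonVec_contactPoint (a b c : ℝ) (ha : 0 < a) (hb : 0 < b) (hc : 0 < c)
    (γ : EuclideanSpace ℝ (Fin 3)) (hγ : ‖γ‖ = 1) :
    poissonVec a b c (contactPoint a b c γ) = γ := by
  have h1 : γ 0 ^ 2 + γ 1 ^ 2 + γ 2 ^ 2 = 1 := by
    have := hγ
    rw [EuclideanSpace.norm_eq] at this
    have h2 : Real.sqrt (∑ i, ‖γ i‖ ^ 2) = 1 := this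
    have h3 : (∑ i : Fin 3, ‖γ i‖ ^ 2) = 1 := Real.sqrt_eq_one.mp h2
    simpa [Fin.sum_univ_three, Real.norm_eq_abs, sq_abs] using h3
  set S : ℝ := a ^ 2 * γ 0 ^ 2 + b ^ 2 * γ 1 ^ 2 + c ^ 2 * γ 2 ^ 2 with hSdef
  have hma : min (a ^ 2) (min (b ^ 2) (c ^ 2)) ≤ a ^ 2 := min_le_left _ _
  have hmb : min (a ^ 2) (min (b ^ 2) (c ^ 2)) ≤ b ^ 2 :=
    le_trans (min_le_right _ _) (min_le_left _ _)
  have hmc : min (a ^ 2) (min (b ^ 2) (c ^ 2)) ≤ c ^ 2 :=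
    le_trans (min_le_right _ _) (min_le_right _ _)
  have hmpos : 0 < min (a ^ 2) (min (b ^ 2) (c ^ 2)) :=
    lt_min (pow_pos ha 2) (lt_min (pow_pos hb 2) (pow_pos hc 2))
  have hS : 0 < S := by
    nlinarith [mul_le_mul_of_nonneg_right hma (sq_nonneg (γ 0)),
      mul_le_mul_of_nonneg_right hmb (sq_nonneg (γ 1)),
      mul_le_mul_of_nonneg_right hmc (sq_nonneg (γ 2))]
  set Δ : ℝ := Real.sqrt S with hΔdef
  have hΔ : 0 < Δ := Real.sqrt_pos.mpr hS
  have hΔ2 : Δ ^ 2 = S := Real.sq_sqrt hS.le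
  have hD : Real.sqrt (b ^ 4 * c ^ 4 * (-(a ^ 2 * γ 0) / Δ) ^ 2 +
      a ^ 4 * c ^ 4 * (-(b ^ 2 * γ 1) / Δ) ^ 2 +
      a ^ 4 * b ^ 4 * (-(c ^ 2 * γ 2) / Δ) ^ 2) = a ^ 2 * b ^ 2 * c ^ 2 / Δ := by
    have harg : b ^ 4 * c ^ 4 * (-(a ^ 2 * γ 0) / Δ) ^ 2 +
        a ^ 4 * c ^ 4 * (-(b ^ 2 * γ 1) / Δ) ^ 2 +
        a ^ 4 * b ^ 4 * (-(c ^ 2 * γ 2) / Δ) ^ 2 = (a ^ 2 * b ^ 2 * c ^ 2 / Δ) ^ 2 := by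
      field_simp
      nlinarith [hΔ2, h1]
    rw [harg, Real.sqrt_sq (by positivity)]
  ext i
  fin_cases i <;>
  · show _ = _
    simp only [poissonVec, contactPoint, Matrix.cons_val_zero, Matrix.cons_val_one,
      Matrix.cons_val_two, Matrix.head_cons, Matrix.tail_cons,
      WithLp.ofLp_toLp, PiLp.toLp_apply, Fin.isValue]
    rw [← hSdef, ← hΔdef]
    rw [hD]
    field_simp
    try ring
    try rfl
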